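/- For every positive integer m, the number of representations r(m) of m as an ordered sum of two squares of integers satisfies r(m) = 4 * ∑_{d ∣ m} χ(d), where χ is the non-principal Dirichlet character modulo 4. -/

import Mathlib

open Zsqrtd GaussianInt ArithmeticFunction
open scoped ArithmeticFunction.zeta

set_option synthInstance.maxHeartbeats 1000000
set_option maxHeartbeats 1000000

/-- The non-principal Dirichlet character modulo 4, integer-valued. -/
def chiZ (d : ℕ) : ℤ := if d % 4 = 1 then 1 else if d % 4 = 3 then -1 else 0

lemma chiZ_mul (a b : ℕ) : chiZ (a * b) = chiZ a * chiZ b := by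
  unfold chiZ
  rw [Nat.mul_mod]
  have ha : a % 4 = 0 ∨ a % 4 = 1 ∨ a % 4 = 2 ∨ a % 4 = 3 := by omega
  have hb : b % 4 = 0 ∨ b % 4 = 1 ∨ b % 4 = 2 ∨ b % 4 = 3 := by omega
  rcases ha with h|h|h|h <;> rcases hb with h'|h'|h'|h' <;> simp [h, h']

lemma chiZ_pow (p i : ℕ) : chiZ (p ^ i) = chiZ p ^ i := by
  induction i with
  | zero => simp [chiZ]
  | succ n ih => rw [pow_succ, pow_succ, chiZ_mul, ih]

/-- `chiZ` as an arithmetic function. -/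
def chiF : ArithmeticFunction ℤ := ⟨fun d => chiZ d, by simp [chiZ]⟩

lemma chiF_mult : chiF.IsMultiplicative :=
  ⟨by simp [chiF, chiZ], fun {m n} _ => chiZ_mul m n⟩

lemma T_split {p n : ℕ} (hp : p.Prime) (hn : n ≠ 0) (hpn : p.Coprime n) (k : ℕ) :
    ∑ d ∈ (p ^ k * n).divisors, chiZ d
      = (∑ i ∈ Finset.range (k + 1), chiZ p ^ i) * ∑ d ∈ n.divisors, chiZ d := by
  have hmult := (isMultiplicative_zeta.natCast.mul chiF_mult)
  have hcop : (p ^ k).Coprime n := hpn.pow_left _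
  have h1 : ∀ x : ℕ, (↑ζ * chiF : ArithmeticFunction ℤ) x = ∑ d ∈ x.divisors, chiZ d := by
    intro x; exact coe_zeta_mul_apply
  calc ∑ d ∈ (p ^ k * n).divisors, chiZ d
      = (↑ζ * chiF : ArithmeticFunction ℤ) (p ^ k * n) := (h1 _).symm
    _ = (↑ζ * chiF : ArithmeticFunction ℤ) (p ^ k) * (↑ζ * chiF) n :=
        hmult.map_mul_of_coprime hcop
    _ = (∑ d ∈ (p ^ k).divisors, chiZ d) * ∑ d ∈ n.divisors, chiZ d := by rw [h1, h1]
    _ = (∑ i ∈ Finset.range (k + 1), chiZ (p ^ i)) * ∑ d ∈ n.divisors, chiZ d := by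
        rw [Nat.sum_divisors_prime_pow hp]
    _ = _ := by simp_rw [chiZ_pow]

lemma T_two (n : ℕ) (hn : n ≠ 0) :
    ∑ d ∈ (2 * n).divisors, chiZ d = ∑ d ∈ n.divisors, chiZ d := by
  have key : ∀ m : ℕ, ∑ d ∈ m.divisors.filter (fun d => ¬ 2 ∣ d), chiZ d
      = ∑ d ∈ m.divisors, chiZ d := by
    intro m
    apply Finset.sum_filter_of_ne
    intro d _ hd
    have h14 : d % 4 = 1 ∨ d % 4 = 3 := by
      by_contra hc
      push_neg at hc
      simp [chiZ, hc.1, hc.2] at hd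
    omega
  rw [← key (2 * n), ← key n]
  congr 1
  ext d
  simp only [Finset.mem_filter, Nat.mem_divisors]
  constructor
  · rintro ⟨⟨hdvd, _⟩, hodd⟩
    have hcop : Nat.Coprime d 2 := Nat.coprime_two_right.2 (Nat.odd_iff.2 (by omega))
    exact ⟨⟨Nat.Coprime.dvd_of_dvd_mul_right hcop (by rwa [mul_comm] at hdvd), hn⟩, hodd⟩
  · rintro ⟨⟨hdvd, _⟩, hodd⟩
    exact ⟨⟨hdvd.mul_left 2, by simpa using hn⟩, hodd⟩

local notation "ℤi" => GaussianInt

/-- The representation-count type. -/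
abbrev SS (m : ℕ) := {z : ℤi // z.norm = (m : ℤ)}

lemma norm_eval (z : ℤi) : z.norm = z.re * z.re + z.im * z.im := by
  rw [Zsqrtd.norm_def]; ring

lemma R_two (n : ℕ) : Nat.card (SS (2 * n)) = Nat.card (SS n) := by
  symm
  apply Nat.card_congr
  apply Equiv.ofBijective (f := fun w : SS n =>
    (⟨(⟨1, 1⟩ : ℤi) * w.1, by
      rw [Zsqrtd.norm_mul, w.2]
      have : ((⟨1, 1⟩ : ℤi)).norm = 2 := by rw [norm_eval]; norm_num
      rw [this]; push_cast; ring⟩ : SS (2 * n)))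
  constructor
  · intro a b hab
    have h2 : (⟨1, 1⟩ : ℤi) ≠ 0 := by
      intro h
      have := congrArg Zsqrtd.re h
      simp at this
    have := Subtype.ext_iff.1 hab
    simp only at this
    exact Subtype.ext (mul_left_cancel₀ h2 this)
  · rintro ⟨z, hz⟩
    have heven : Even (z.re + z.im) := by
      have h2 : Even (z.re * z.re + z.im * z.im) := by
        rw [← norm_eval, hz]
        exact ⟨n, by push_cast; ring⟩
      simp only [Int.even_add, Int.even_mul, or_self] at h2 ⊢
      tauto
    obtain ⟨t, ht⟩ := heven
    refine ⟨⟨⟨t, z.im - t⟩, ?_⟩, ?_⟩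
    · have : (⟨1, 1⟩ : ℤi) * ⟨t, z.im - t⟩ = z := by
        ext <;> simp [Zsqrtd.re_mul, Zsqrtd.im_mul] <;> omega
      have h2 : (2 : ℤ) * ((⟨t, z.im - t⟩ : ℤi)).norm = 2 * n := by
        have := congrArg Zsqrtd.norm this
        rw [Zsqrtd.norm_mul] at this
        have hn2 : ((⟨1, 1⟩ : ℤi)).norm = 2 := by rw [norm_eval]; norm_num
        rw [hn2, hz] at this
        rw [this]; push_cast; ring
      exact mul_left_cancel₀ (by norm_num) h2
    · apply Subtype.ext
      simp only
      ext <;> simp [Zsqrtd.re_mul, Zsqrtd.im_mul] <;> omega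

lemma p3_dvd {p : ℕ} (hp : p.Prime) (h3 : p % 4 = 3) {x y : ℤ}
    (h : (p : ℤ) ∣ x * x + y * y) : (p : ℤ) ∣ x ∧ (p : ℤ) ∣ y := by
  haveI : Fact p.Prime := ⟨hp⟩
  have key : ∀ a b : ℤ, (p : ℤ) ∣ a * a + b * b → (p : ℤ) ∣ a := by
    intro a b hab
    by_contra hnd
    have ha : (a : ZMod p) ≠ 0 := by
      rwa [Ne, ZMod.intCast_zmod_eq_zero_iff_dvd]
    have hz : (a : ZMod p) * a + (b : ZMod p) * b = 0 := by
      have := (ZMod.intCast_zmod_eq_zero_iff_dvd _ p).2 hab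
      push_cast at this
      linear_combination this
    have hb2 : (b : ZMod p) ^ 2 = -((a : ZMod p) ^ 2) := by linear_combination hz
    have hsq : ((b : ZMod p) * (a : ZMod p)⁻¹) ^ 2 = -1 := by
      calc ((b : ZMod p) * (a : ZMod p)⁻¹) ^ 2
          = (b : ZMod p) ^ 2 * (((a : ZMod p)) ^ 2)⁻¹ := by rw [mul_pow, inv_pow]
        _ = -(((a : ZMod p)) ^ 2 * (((a : ZMod p)) ^ 2)⁻¹) := by rw [hb2]; ring
        _ = -1 := by rw [mul_inv_cancel₀ (pow_ne_zero 2 ha)]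
    have : IsSquare (-1 : ZMod p) := ⟨_, by rw [← hsq, sq]⟩
    rw [ZMod.exists_sq_eq_neg_one_iff] at this
    exact this h3
  exact ⟨key x y h, key y x (by rwa [add_comm] at h)⟩

lemma R_psq {p : ℕ} (hp : p.Prime) (h3 : p % 4 = 3) (n : ℕ) :
    Nat.card (SS (p ^ 2 * n)) = Nat.card (SS n) := by
  symm
  apply Nat.card_congr
  apply Equiv.ofBijective (f := fun w : SS n =>
    (⟨((p : ℤi)) * w.1, by
      rw [Zsqrtd.norm_mul, Zsqrtd.norm_natCast, w.2]
      push_cast; ring⟩ : SS (p ^ 2 * n)))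
  constructor
  · intro a b hab
    have hne : ((p : ℤi)) ≠ 0 := by
      simp only [Ne, Nat.cast_eq_zero]
      exact hp.ne_zero
    exact Subtype.ext (mul_left_cancel₀ hne (Subtype.ext_iff.1 hab))
  · rintro ⟨z, hz⟩
    have hdvd : (p : ℤ) ∣ z.re * z.re + z.im * z.im := by
      rw [← norm_eval, hz]; push_cast; exact ⟨p * n, by ring⟩
    obtain ⟨hx, hy⟩ := p3_dvd hp h3 hdvd
    obtain ⟨a, ha⟩ := hx
    obtain ⟨b, hb⟩ := hy
    have hzw : ((p : ℤi)) * ⟨a, b⟩ = z := by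
      ext <;> simp [Zsqrtd.re_mul, Zsqrtd.im_mul] <;> omega
    refine ⟨⟨⟨a, b⟩, ?_⟩, Subtype.ext hzw⟩
    have h2 : (p : ℤ) * (p : ℤ) * ((⟨a, b⟩ : ℤi)).norm = (p : ℤ) * (p : ℤ) * n := by
      have := congrArg Zsqrtd.norm hzw
      rw [Zsqrtd.norm_mul, Zsqrtd.norm_natCast, hz] at this
      rw [this]; push_cast; ring
    have hpne : (p : ℤ) * (p : ℤ) ≠ 0 := by
      have := hp.ne_zero; positivity
    exact mul_left_cancel₀ hpne h2

lemma R_p_zero {p : ℕ} (hp : p.Prime) (h3 : p % 4 = 3) {m : ℕ}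
    (h1 : p ∣ m) (h2 : ¬ p ^ 2 ∣ m) : Nat.card (SS m) = 0 := by
  have : IsEmpty (SS m) := by
    constructor
    rintro ⟨z, hz⟩
    have hdvd : (p : ℤ) ∣ z.re * z.re + z.im * z.im := by
      rw [← norm_eval, hz]
      exact Int.natCast_dvd_natCast.2 h1
    obtain ⟨hx, hy⟩ := p3_dvd hp h3 hdvd
    obtain ⟨a, ha⟩ := hx
    obtain ⟨b, hb⟩ := hy
    apply h2
    have : ((p : ℤ)) ^ 2 ∣ (m : ℤ) := by
      rw [← hz, norm_eval, ha, hb]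
      exact ⟨a * a + b * b, by ring⟩
    have := Int.natCast_dvd_natCast.1 (by push_cast at this ⊢; exact this)
    exact this
  simp [Nat.card_eq_zero_of_infinite, Nat.card_of_isEmpty]

lemma norm_one_cases {u : ℤi} (hu : u.norm = 1) :
    u = ⟨1, 0⟩ ∨ u = ⟨-1, 0⟩ ∨ u = ⟨0, 1⟩ ∨ u = ⟨0, -1⟩ := by
  rw [norm_eval] at hu
  obtain ⟨x, y⟩ := u
  simp only at hu
  simp only [Zsqrtd.ext_iff]
  have hx : -1 ≤ x ∧ x ≤ 1 := by constructor <;> nlinarith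
  have hy : -1 ≤ y ∧ y ≤ 1 := by constructor <;> nlinarith
  obtain ⟨hx1, hx2⟩ := hx
  obtain ⟨hy1, hy2⟩ := hy
  interval_cases x <;> interval_cases y <;> omega

lemma prime_of_norm_prime {π : ℤi} {p : ℕ} (hp : p.Prime) (hn : π.norm = p) :
    Prime π := by
  rw [← irreducible_iff_prime]
  constructor
  · rw [← Zsqrtd.norm_eq_one_iff, hn]
    simpa using hp.ne_one
  · intro a b hab
    have h1 : a.norm * b.norm = (p : ℤ) := by rw [← Zsqrtd.norm_mul, ← hab, hn]
    have h2 : a.norm.natAbs * b.norm.natAbs = p := by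
      rw [← Int.natAbs_mul, h1, Int.natAbs_natCast]
    rcases hp.eq_one_or_self_of_dvd _ ⟨_, h2.symm⟩ with h | h
    · exact Or.inl (Zsqrtd.norm_eq_one_iff.1 h)
    · right
      apply Zsqrtd.norm_eq_one_iff.1
      have hb : p * b.norm.natAbs = p * 1 := by
        calc p * b.norm.natAbs = a.norm.natAbs * b.norm.natAbs := by rw [h]
          _ = p := h2
          _ = p * 1 := (mul_one p).symm
      exact mul_left_cancel₀ hp.ne_zero hb

lemma znorm_pow (z : ℤi) (t : ℕ) : (z ^ t).norm = z.norm ^ t := by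
  induction t with
  | zero => simp
  | succ s ih => rw [pow_succ, pow_succ, Zsqrtd.norm_mul, ih]

section Rsplit

variable {p : ℕ} (hp : p.Prime) {π : ℤi} (hπ : π.norm = (p : ℤ))

include hp hπ

lemma pi_ne_zero : π ≠ 0 := by
  intro h
  rw [h] at hπ
  simp only [Zsqrtd.norm_zero] at hπ
  exact hp.ne_zero (by exact_mod_cast hπ.symm)

lemma star_pi_norm : (star π).norm = (p : ℤ) := by rw [Zsqrtd.norm_conj, hπ]

lemma p_eq_pi_mul_star : ((p : ℕ) : ℤi) = π * star π := by
  have := Zsqrtd.norm_eq_mul_conj π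
  rw [hπ] at this
  exact_mod_cast this

lemma exists_rep (hπp : Prime π) (n : ℕ) :
    ∀ (k : ℕ) (z : ℤi), z.norm = ((p ^ k * n : ℕ) : ℤ) →
      ∃ a, a ≤ k ∧ ∃ w : ℤi, w.norm = (n : ℤ) ∧ z = π ^ a * (star π) ^ (k - a) * w := by
  intro k
  induction k with
  | zero => intro z hz; exact ⟨0, le_rfl, z, by simpa using hz, by simp⟩
  | succ k ih =>
    intro z hz
    have hzz : z * star z = ((p ^ (k + 1) * n : ℕ) : ℤi) := by
      rw [← Zsqrtd.norm_eq_mul_conj, hz]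
      push_cast
      ring
    have hdvd : π ∣ z * star z := by
      rw [hzz]
      have h1 : ((p : ℕ) : ℤi) ∣ ((p ^ (k + 1) * n : ℕ) : ℤi) :=
        Nat.cast_dvd_cast (dvd_mul_of_dvd_left (dvd_pow_self p k.succ_ne_zero) n)
      have h2 : π ∣ ((p : ℕ) : ℤi) := by
        rw [p_eq_pi_mul_star hp hπ]
        exact dvd_mul_right _ _
      exact h2.trans h1
    rcases (hπp.dvd_mul.mp hdvd) with hd | hd
    · obtain ⟨z₁, rfl⟩ := hd
      have hz₁ : z₁.norm = ((p ^ k * n : ℕ) : ℤ) := by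
        have h2 : π.norm * z₁.norm = (p : ℤ) * ((p ^ k * n : ℕ) : ℤ) := by
          rw [← Zsqrtd.norm_mul, hz]
          push_cast
          ring
        rw [hπ] at h2
        exact mul_left_cancel₀ (by exact_mod_cast hp.ne_zero) h2
      obtain ⟨a, ha, w, hw, hrep⟩ := ih z₁ hz₁
      refine ⟨a + 1, by omega, w, hw, ?_⟩
      have hexp : k + 1 - (a + 1) = k - a := by omega
      rw [hexp, hrep, pow_succ]
      ring
    · obtain ⟨c, hc⟩ := hd
      have hzc : z = star π * star c := by
        have := congrArg star hc
        rwa [star_star, star_mul', ] at this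
      have hc₁ : (star c).norm = ((p ^ k * n : ℕ) : ℤ) := by
        have h2 : (star π).norm * (star c).norm = (p : ℤ) * ((p ^ k * n : ℕ) : ℤ) := by
          rw [← Zsqrtd.norm_mul, ← hzc, hz]
          push_cast
          ring
        rw [star_pi_norm hp hπ] at h2
        exact mul_left_cancel₀ (by exact_mod_cast hp.ne_zero) h2
      obtain ⟨a, ha, w, hw, hrep⟩ := ih (star c) hc₁
      refine ⟨a, by omega, w, hw, ?_⟩
      have hexp : k + 1 - a = (k - a) + 1 := by omega
      rw [hexp, hzc, hrep, pow_succ]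
      ring

lemma R_split_aux (hπp : Prime π) (hnd : ¬ π ∣ star π) {n : ℕ} (hpn : ¬ p ∣ n) (k : ℕ) :
    Nat.card (SS (p ^ k * n)) = (k + 1) * Nat.card (SS n) := by
  have hπ0 : π ≠ 0 := pi_ne_zero hp hπ
  -- the bijection
  set F : Fin (k + 1) × SS n → SS (p ^ k * n) := fun x =>
    ⟨π ^ (x.1 : ℕ) * (star π) ^ (k - (x.1 : ℕ)) * x.2.1, by
      rw [Zsqrtd.norm_mul, Zsqrtd.norm_mul, znorm_pow, znorm_pow, star_pi_norm hp hπ, hπ, x.2.2,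
        ← pow_add]
      have : (x.1 : ℕ) + (k - (x.1 : ℕ)) = k := by omega
      rw [this]
      push_cast
      ring⟩ with hF
  -- key: no cross equalities
  have key : ∀ (a b : ℕ), a ≤ k → b ≤ k → a < b → ∀ w w' : ℤi, w.norm = (n : ℤ) →
      π ^ a * (star π) ^ (k - a) * w ≠ π ^ b * (star π) ^ (k - b) * w' := by
    intro a b ha hb hab w w' hw heq
    have hb' : π ^ b = π ^ a * π ^ (b - a) := by
      rw [← pow_add]
      congr 1
      omega
    rw [hb'] at heq
    have heq2 : π ^ a * ((star π) ^ (k - a) * w)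
        = π ^ a * (π ^ (b - a) * ((star π) ^ (k - b) * w')) := by linear_combination heq
    have heq3 : (star π) ^ (k - a) * w = π ^ (b - a) * ((star π) ^ (k - b) * w') :=
      mul_left_cancel₀ (pow_ne_zero a hπ0) heq2
    have hdvd : π ∣ (star π) ^ (k - a) * w := by
      rw [heq3]
      exact dvd_mul_of_dvd_left (dvd_pow_self π (by omega : b - a ≠ 0)) _
    rcases hπp.dvd_mul.mp hdvd with hd | hd
    · exact hnd (hπp.dvd_of_dvd_pow hd)
    · obtain ⟨c, hc⟩ := hd
      apply hpn
      have : (n : ℤ) = (p : ℤ) * c.norm := by rw [← hw, hc, Zsqrtd.norm_mul, hπ]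
      have h2 : (p : ℤ) ∣ (n : ℤ) := ⟨c.norm, this⟩
      exact_mod_cast h2
  have hinj : Function.Injective F := by
    rintro ⟨⟨a, ha⟩, w⟩ ⟨⟨b, hb⟩, w'⟩ heq
    have heq' := Subtype.ext_iff.1 heq
    simp only [hF] at heq'
    rcases lt_trichotomy a b with h | h | h
    · exact absurd heq' (key a b (by omega) (by omega) h w.1 w'.1 w.2)
    · subst h
      have hw : w.1 = w'.1 :=
        mul_left_cancel₀ (mul_ne_zero (pow_ne_zero _ hπ0)
          (pow_ne_zero _ (fun h0 => hπ0 (by simpa using congrArg star h0)))) heq'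
      simp only [Prod.mk.injEq]
      exact ⟨trivial, Subtype.ext hw⟩
    · exact absurd heq'.symm (key b a (by omega) (by omega) h w'.1 w.1 w'.2)
  have hsurj : Function.Surjective F := by
    rintro ⟨z, hz⟩
    obtain ⟨a, ha, w, hw, hrep⟩ := exists_rep hp hπ hπp n k z hz
    exact ⟨⟨⟨a, by omega⟩, ⟨w, hw⟩⟩, Subtype.ext hrep.symm⟩
  rw [← Nat.card_congr (Equiv.ofBijective F ⟨hinj, hsurj⟩), Nat.card_prod]
  simp

end Rsplit

lemma R_split {p : ℕ} (hp : p.Prime) (h1 : p % 4 = 1) {n : ℕ} (hpn : ¬ p ∣ n) (k : ℕ) :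
    Nat.card (SS (p ^ k * n)) = (k + 1) * Nat.card (SS n) := by
  haveI : Fact p.Prime := ⟨hp⟩
  obtain ⟨a, b, hab⟩ := Nat.Prime.sq_add_sq (p := p) (by omega)
  set π : ℤi := ⟨(a : ℤ), (b : ℤ)⟩ with hπdef
  have hπ : π.norm = (p : ℤ) := by
    rw [norm_eval]
    simp only [hπdef]
    push_cast
    nlinarith [hab]
  have hπp : Prime π := prime_of_norm_prime hp hπ
  have ha0 : (0 : ℤ) ≤ (a : ℤ) := Int.natCast_nonneg a
  have hb0 : (0 : ℤ) ≤ (b : ℤ) := Int.natCast_nonneg b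
  have hnd : ¬ π ∣ star π := by
    rintro ⟨u, hu⟩
    have hun : u.norm = 1 := by
      have h2 : (p : ℤ) * u.norm = (p : ℤ) * 1 := by
        rw [mul_one, ← hπ]
        calc π.norm * u.norm = (π * u).norm := (Zsqrtd.norm_mul _ _).symm
          _ = (star π).norm := by rw [← hu]
          _ = π.norm := Zsqrtd.norm_conj π
      exact mul_left_cancel₀ (by exact_mod_cast hp.ne_zero) h2
    have hstar : star π = ⟨(a : ℤ), -(b : ℤ)⟩ := by
      rw [hπdef, Zsqrtd.star_mk]
    have hsq : ∀ c : ℕ, p ≠ c * c := by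
      intro c hc
      rcases (hp.eq_one_or_self_of_dvd c ⟨c, hc⟩) with h | h
      · rw [h, mul_one] at hc
        exact hp.ne_one hc
      · subst h
        nlinarith [hp.two_le]
    rcases norm_one_cases hun with h | h | h | h <;> subst h <;>
        rw [hstar] at hu <;>
        simp only [hπdef, Zsqrtd.ext_iff, Zsqrtd.re_mul, Zsqrtd.im_mul] at hu <;> norm_num at hu
    · -- u = 1 : b = 0
      have hb : b = 0 := by omega
      exact hsq a (by rw [← hab, hb]; ring)
    · -- u = -1 : a = 0
      have ha : a = 0 := by omega
      exact hsq b (by rw [← hab, ha]; ring)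
    · -- u = i : a = -b, forcing a = b = 0
      have h0 : a = 0 ∧ b = 0 := by omega
      rw [h0.1, h0.2] at hab
      simp at hab
      exact hp.ne_zero hab.symm
    · -- u = -i : a = b, so p = 2 * a ^ 2
      have hab2 : a = b := hu.1
      have h2 : 2 ∣ p := ⟨b ^ 2, by rw [← hab, hab2]; ring⟩
      rcases hp.eq_one_or_self_of_dvd 2 h2 with h | h <;> omega
  exact R_split_aux hp hπ hπp hnd hpn k

lemma R_one : Nat.card (SS 1) = 4 := by
  have hset : {z : ℤi | z.norm = ((1 : ℕ) : ℤ)}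
      = ↑({⟨1, 0⟩, ⟨-1, 0⟩, ⟨0, 1⟩, ⟨0, -1⟩} : Finset ℤi) := by
    ext z
    simp only [Set.mem_setOf_eq, Finset.coe_insert, Set.mem_insert_iff, Finset.coe_singleton,
      Set.mem_singleton_iff, Nat.cast_one]
    constructor
    · intro hz
      exact norm_one_cases hz
    · rintro (h | h | h | h) <;> subst h <;> rw [norm_eval] <;> norm_num
  have : Nat.card (SS 1) = ({⟨1, 0⟩, ⟨-1, 0⟩, ⟨0, 1⟩, ⟨0, -1⟩} : Finset ℤi).card := by
    rw [← Set.ncard_coe_finset, ← hset, ← Nat.card_coe_set_eq]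
    rfl
  rw [this]
  decide

lemma aux_main : ∀ m : ℕ, 0 < m → (Nat.card (SS m) : ℤ) = 4 * ∑ d ∈ m.divisors, chiZ d := by
  intro m
  induction m using Nat.strong_induction_on with
  | _ m ih =>
  intro hm
  rcases eq_or_lt_of_le (Nat.one_le_iff_ne_zero.2 hm.ne') with h1 | h1
  · -- m = 1
    rw [← h1, R_one]
    simp [chiZ]
  by_cases h2 : 2 ∣ m
  · -- even case
    obtain ⟨m', rfl⟩ := h2
    have hm' : 0 < m' := by omega
    rw [R_two, T_two m' hm'.ne']
    exact ih m' (by omega) hm'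
  -- odd case
  set p := m.minFac with hpdef
  have hp : p.Prime := Nat.minFac_prime (by omega)
  have hpm : p ∣ m := Nat.minFac_dvd m
  have hp2 : p ≠ 2 := by
    intro h
    exact h2 (h ▸ hpm)
  have hpodd : p % 2 = 1 := Nat.odd_iff.1 (hp.odd_of_ne_two hp2)
  set k := m.factorization p with hkdef
  set n := m / p ^ k with hndef
  have hk1 : 1 ≤ k := hp.factorization_pos_of_dvd hm.ne' hpm
  have hmn : m = p ^ k * n := (Nat.ordProj_mul_ordCompl_eq_self m p).symm
  have hpn : ¬ p ∣ n := Nat.not_dvd_ordCompl hp hm.ne'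
  have hn0 : 0 < n := Nat.ordCompl_pos p hm.ne'
  have hcop : p.Coprime n := hp.coprime_iff_not_dvd.2 hpn
  have h4 : p % 4 = 1 ∨ p % 4 = 3 := by omega
  rcases h4 with h4 | h4
  · -- p ≡ 1 mod 4
    have hpk2 : 2 ≤ p ^ k := le_trans hp.two_le (Nat.le_self_pow (by omega) p)
    have hnm : n < m := by
      have h2n : 2 * n ≤ m := by
        rw [hmn]
        exact Nat.mul_le_mul_right n hpk2
      omega
    have ihn := ih n hnm hn0
    rw [hmn, R_split hp h4 hpn k, T_split hp hn0.ne' hcop k]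
    have hchi : chiZ p = 1 := by simp [chiZ, h4]
    rw [hchi]
    have hgeom : (∑ i ∈ Finset.range (k + 1), (1 : ℤ) ^ i) = (k + 1 : ℤ) := by
      simp
    rw [hgeom]
    push_cast
    linear_combination ((k : ℤ) + 1) * ihn
  · -- p ≡ 3 mod 4
    have hchi : chiZ p = -1 := by simp [chiZ, h4, (by omega : ¬ p % 4 = 1)]
    by_cases hps : p ^ 2 ∣ m
    · -- p² ∣ m : descend to m / p²
      have hk2 : 2 ≤ k := (Nat.Prime.pow_dvd_iff_le_factorization hp hm.ne').1 hps
      set m₂ := m / p ^ 2 with hm₂def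
      have hsplit : m = p ^ 2 * (p ^ (k - 2) * n) := by
        rw [hmn, ← mul_assoc, ← pow_add]
        congr 2
        omega
      have hm₂ : m₂ = p ^ (k - 2) * n := by
        rw [hm₂def, hsplit, Nat.mul_div_cancel_left _ (pow_pos hp.pos 2)]
      have hm₂pos : 0 < m₂ := by
        rw [hm₂]
        exact Nat.mul_pos (pow_pos hp.pos _) hn0
      have hmm : m = p ^ 2 * m₂ := by rw [hm₂, ← hsplit]
      have hp4 : 4 ≤ p ^ 2 := by nlinarith [hp.two_le]
      have hm₂lt : m₂ < m := by
        calc m₂ < 4 * m₂ := by omega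
          _ ≤ p ^ 2 * m₂ := Nat.mul_le_mul_right _ hp4
          _ = m := hmm.symm
      have hR : Nat.card (SS m) = Nat.card (SS m₂) := by
        calc Nat.card (SS m) = Nat.card (SS (p ^ 2 * m₂)) := by rw [← hmm]
          _ = Nat.card (SS m₂) := R_psq hp h4 m₂
      have hT : ∑ d ∈ m.divisors, chiZ d = ∑ d ∈ m₂.divisors, chiZ d := by
        rw [hmn, hm₂, T_split hp hn0.ne' hcop, T_split hp hn0.ne' hcop]
        congr 1
        simp_rw [hchi]
        rw [neg_one_geom_sum, neg_one_geom_sum]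
        have hiff : Even (k + 1) ↔ Even (k - 2 + 1) := by
          rw [Nat.even_iff, Nat.even_iff]
          omega
        by_cases he : Even (k + 1)
        · rw [if_pos he, if_pos (hiff.1 he)]
        · rw [if_neg he, if_neg (fun h => he (hiff.2 h))]
      rw [hR, hT]
      exact ih m₂ hm₂lt hm₂pos
    · -- p ∥ m : both sides vanish
      have hk : k = 1 := by
        by_contra hk'
        exact hps ((pow_dvd_pow p (by omega : 2 ≤ k)).trans (Nat.ordProj_dvd m p))
      rw [R_p_zero hp h4 hpm hps]
      rw [hmn, T_split hp hn0.ne' hcop, hk]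
      simp_rw [hchi]
      rw [neg_one_geom_sum]
      norm_num

/-- For every positive integer `m`, the number of ordered representations of `m`
as a sum of two squares of integers equals `4 * ∑_{d ∣ m} χ(d)`. -/
theorem sum_two_squares_count (m : ℕ) (hm : 0 < m) :
    ({x : ℤ × ℤ | x.1 ^ 2 + x.2 ^ 2 = (m : ℤ)}.ncard : ℤ)
      = 4 * ∑ d ∈ m.divisors, chiZ d := by
  have hcard : {x : ℤ × ℤ | x.1 ^ 2 + x.2 ^ 2 = (m : ℤ)}.ncard = Nat.card (SS m) := by
    rw [← Nat.card_coe_set_eq]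
    refine Nat.card_congr ⟨fun x => ⟨⟨x.1.1, x.1.2⟩, ?_⟩, fun z => ⟨(z.1.re, z.1.im), ?_⟩, ?_, ?_⟩
    · have h := x.2
      simp only [Set.mem_setOf_eq] at h
      rw [norm_eval]
      simp only
      linear_combination h
    · have h := z.2
      simp only [Set.mem_setOf_eq]
      rw [norm_eval] at h
      linear_combination h
    · intro x
      rfl
    · intro z
      rfl
  rw [hcard]
  exact aux_main m hm
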